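/- For the Shiriyayev–Roberts–Robbins–Siegmund changepoint detection scheme based on the maximum likelihood estimators, E_∞ N_A ≥ A for all 0 < A < ∞. -/

import Mathlib

open MeasureTheory ProbabilityTheory Filter
open scoped ENNReal NNReal

noncomputable section


/-- The Gamma(θ,1) density. -/
def gam (θ x : ℝ) : ℝ := gammaPDFReal θ 1 x

-- helper: composition with continuous-on-open function
lemma measurable_comp_continuousOn {α : Type*} [MeasurableSpace α] {f : ℝ → ℝ} {U : Set ℝ}
    (hU : IsOpen U) (hf : ContinuousOn f U) {t : α → ℝ} (ht : Measurable t)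
    (h : ∀ a, t a ∈ U) : Measurable fun a => f (t a) := by
  apply measurable_of_isOpen
  intro s hs
  have : (fun a => f (t a)) ⁻¹' s = t ⁻¹' (U ∩ f ⁻¹' s) := by
    ext a; simp only [Set.mem_preimage, Set.mem_inter_iff]
    exact ⟨fun hfa => ⟨h a, hfa⟩, fun ⟨_, hfa⟩ => hfa⟩
  rw [this]
  exact ht (hf.isOpen_inter_preimage hU hs).measurableSet

lemma continuousOn_Gamma : ContinuousOn Real.Gamma (Set.Ioi 0) := by
  intro x hx
  have hx' : (0:ℝ) < x := hx
  have : DifferentiableAt ℝ Real.Gamma x := by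
    apply Real.differentiableAt_Gamma
    intro m hc
    rw [hc] at hx'
    have : (0:ℝ) ≤ m := Nat.cast_nonneg m
    linarith
  exact this.continuousAt.continuousWithinAt

lemma gam_eq (θ x : ℝ) : gam θ x = if 0 ≤ x then x ^ (θ - 1) * Real.exp (-x) / Real.Gamma θ else 0 := by
  unfold gam gammaPDFReal
  split_ifs with h
  · rw [Real.one_rpow]; ring_nf
  · rfl

lemma gam_nonneg {θ : ℝ} (hθ : 0 < θ) (x : ℝ) : 0 ≤ gam θ x :=
  gammaPDFReal_nonneg hθ one_pos x

lemma gam_meas {α : Type*} [MeasurableSpace α] {t s : α → ℝ} (ht : Measurable t)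
    (hs : Measurable s) (htpos : ∀ a, 0 < t a) :
    Measurable fun a => gam (t a) (s a) := by
  simp only [gam_eq]
  apply Measurable.ite (measurableSet_le measurable_const hs)
  · exact ((hs.pow (ht.sub measurable_const)).mul hs.neg.exp).div
      (measurable_comp_continuousOn isOpen_Ioi continuousOn_Gamma ht htpos)
  · exact measurable_const

/-- The digamma function `ψ(θ) = d(log Γ(θ))/dθ`. -/
def digamma (x : ℝ) : ℝ := deriv (fun y => Real.log (Real.Gamma y)) x

lemma digamma_monotoneOn : MonotoneOn digamma (Set.Ioi 0) := by
  have h : MonotoneOn (deriv (Real.log ∘ Real.Gamma)) (Set.Ioi 0) := by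
    apply Real.convexOn_log_Gamma.monotoneOn_deriv
    intro x hx
    have hx' : (0:ℝ) < x := hx
    have hg : DifferentiableAt ℝ Real.Gamma x := by
      apply Real.differentiableAt_Gamma
      intro m hc
      rw [hc] at hx'
      have : (0:ℝ) ≤ m := Nat.cast_nonneg m
      linarith
    exact hg.log (Real.Gamma_pos_of_pos hx').ne'
  have : digamma = deriv (Real.log ∘ Real.Gamma) := rfl
  rw [this]
  exact h

lemma psinv_monotone (ψinv : ℝ → ℝ) (hψinv : ∀ y : ℝ, 0 < ψinv y ∧ digamma (ψinv y) = y) :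
    Monotone ψinv := by
  intro a b hab
  by_contra hlt
  push_neg at hlt
  have h1 := hψinv a
  have h2 := hψinv b
  have := digamma_monotoneOn (Set.mem_Ioi.mpr h2.1) (Set.mem_Ioi.mpr h1.1) hlt.le
  rw [h1.2, h2.2] at this
  have : a = b := le_antisymm hab this
  rw [this] at hlt
  exact lt_irrefl _ hlt

lemma key_integral {θ₀ θ : ℝ} (hθ₀ : 0 < θ₀) (hθ : 0 < θ) :
    ∫⁻ x, ENNReal.ofReal (gam θ x / gam θ₀ x) ∂(gammaMeasure θ₀ 1) = 1 := by
  have hmeas : Measurable fun x => ENNReal.ofReal (gam θ x / gam θ₀ x) :=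
    ((measurable_gammaPDFReal θ 1).div (measurable_gammaPDFReal θ₀ 1)).ennreal_ofReal
  rw [gammaMeasure, lintegral_withDensity_eq_lintegral_mul _
    (show Measurable (gammaPDF θ₀ 1) from (measurable_gammaPDFReal θ₀ 1).ennreal_ofReal) hmeas]
  have hae : ∀ᵐ (x : ℝ), x ≠ 0 := by
    refine ae_iff.mpr ?_
    simp only [ne_eq, not_not, Set.setOf_eq_eq_singleton]
    exact measure_singleton 0
  have heq : ∀ᵐ (x : ℝ), (gammaPDF θ₀ 1 * fun x => ENNReal.ofReal (gam θ x / gam θ₀ x)) x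
      = gammaPDF θ 1 x := by
    filter_upwards [hae] with x hx
    rcases lt_or_gt_of_ne hx with hneg | hpos
    · simp only [Pi.mul_apply, gammaPDF_of_neg hneg, zero_mul]
    · have h0 : 0 < gam θ₀ x := gammaPDFReal_pos hθ₀ one_pos hpos
      simp only [Pi.mul_apply]
      rw [show gammaPDF θ₀ 1 x = ENNReal.ofReal (gam θ₀ x) from rfl,
        show gammaPDF θ 1 x = ENNReal.ofReal (gam θ x) from rfl,
        ← ENNReal.ofReal_mul h0.le, mul_div_cancel₀ _ h0.ne']
  rw [lintegral_congr_ae heq]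
  exact lintegral_gammaPDF_eq_one hθ one_pos

lemma inner_step {α : Type*} [MeasurableSpace α] (ν : Measure α) [SFinite ν]
    {θ₀ : ℝ} (hθ₀ : 0 < θ₀) (G : α → ℝ≥0∞) (hG : Measurable G)
    (t : α → ℝ) (ht : Measurable t) (htpos : ∀ a, 0 < t a) :
    ∫⁻ q : α × ℝ, G q.1 * ENNReal.ofReal (gam (t q.1) q.2 / gam θ₀ q.2)
      ∂(ν.prod (gammaMeasure θ₀ 1)) = ∫⁻ a, G a ∂ν := by
  haveI : IsProbabilityMeasure (gammaMeasure θ₀ 1) := isProbabilityMeasure_gammaMeasure hθ₀ one_pos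
  have hmeas : Measurable fun q : α × ℝ =>
      G q.1 * ENNReal.ofReal (gam (t q.1) q.2 / gam θ₀ q.2) := by
    apply (hG.comp measurable_fst).mul
    apply Measurable.ennreal_ofReal
    exact (gam_meas (ht.comp measurable_fst) measurable_snd (fun q => htpos q.1)).div
      (gam_meas measurable_const measurable_snd (fun _ => hθ₀))
  rw [lintegral_prod _ hmeas.aemeasurable]
  have hinner : ∀ a, (∫⁻ y, G a * ENNReal.ofReal (gam (t a) y / gam θ₀ y)
      ∂(gammaMeasure θ₀ 1)) = G a := by
    intro a
    rw [lintegral_const_mul _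
      (show Measurable fun y => ENNReal.ofReal (gam (t a) y / gam θ₀ y) from
        ((measurable_gammaPDFReal (t a) 1).div (measurable_gammaPDFReal θ₀ 1)).ennreal_ofReal),
      key_integral hθ₀ (htpos a), mul_one]
  simp_rw [hinner]

lemma sum_ind_range_le (c : ℝ≥0∞) : ∀ n : ℕ,
    (∑ m ∈ Finset.range n, if ((m+1 : ℕ) : ℝ≥0∞) ≤ c then (1:ℝ≥0∞) else 0) ≤ c := by
  intro n
  induction n with
  | zero => simp
  | succ n ih =>
    by_cases h : ((n+1 : ℕ) : ℝ≥0∞) ≤ c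
    · calc (∑ m ∈ Finset.range (n+1), if ((m+1:ℕ):ℝ≥0∞) ≤ c then (1:ℝ≥0∞) else 0)
          ≤ ∑ _m ∈ Finset.range (n+1), (1:ℝ≥0∞) :=
            Finset.sum_le_sum (fun m _ => by split <;> simp)
        _ = ((n+1 : ℕ) : ℝ≥0∞) := by simp
        _ ≤ c := h
    · rw [Finset.sum_range_succ, if_neg h, add_zero]
      exact ih

/-- for the SRRS changepoint detection scheme based on the maximum
likelihood estimators, `E_∞ N_A ≥ A` for all `0 < A < ∞`. -/
theorem srrs_mle_arl_lower_bound
    {Ω : Type*} [MeasurableSpace Ω] (P : Measure Ω) [IsProbabilityMeasure P]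
    (θ₀ : ℝ) (hθ₀ : 0 < θ₀)
    (X : ℕ → Ω → ℝ) (hXmeas : ∀ i, Measurable (X i))
    (hindep : iIndepFun X P)
    (hlaw : ∀ i, 1 ≤ i → Measure.map (X i) P = gammaMeasure θ₀ 1)
    -- ψ is a strictly increasing bijection from (0,∞) onto ℝ with inverse ψ⁻¹
    (ψinv : ℝ → ℝ)
    (hψinv : ∀ y : ℝ, 0 < ψinv y ∧ digamma (ψinv y) = y)
    (hψinv' : ∀ x : ℝ, 0 < x → ψinv (digamma x) = x)
    -- θ_{k,k} = θ₀ and θ_{n,k} = ψ⁻¹((Σ_{i=k}^{n−1} log X_i)/(n−k)) for n > k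
    (θnk : ℕ → ℕ → Ω → ℝ)
    (hθkk : ∀ k ω, θnk k k ω = θ₀)
    (hθnk : ∀ k n ω, k < n →
      θnk k n ω = ψinv ((∑ i ∈ Finset.Ico k n, Real.log (X i ω)) / ((n : ℝ) - (k : ℝ))))
    (Λ : ℕ → ℕ → Ω → ℝ)
    (hΛ : ∀ k n ω, Λ k n ω = ∏ i ∈ Finset.Icc k n, gam (θnk k i ω) (X i ω) / gam θ₀ (X i ω))
    (R : ℕ → Ω → ℝ) (hR : ∀ n ω, R n ω = ∑ k ∈ Finset.Icc 1 n, Λ k n ω)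
    (A : ℝ) (hA : 0 < A)
    (N : Ω → ℝ≥0∞)
    (hN : ∀ ω, N ω = ⨅ n ∈ {n : ℕ | 1 ≤ n ∧ A ≤ R n ω}, (n : ℝ≥0∞)) :
    ENNReal.ofReal A ≤ ∫⁻ ω, N ω ∂P := by
  classical
  haveI hPμγ : IsProbabilityMeasure (gammaMeasure θ₀ 1) := isProbabilityMeasure_gammaMeasure hθ₀ one_pos
  have hψpos : ∀ y, 0 < ψinv y := fun y => (hψinv y).1
  have hψmeas : Measurable ψinv := (psinv_monotone ψinv hψinv).measurable
  have hθpos : ∀ k i ω, k ≤ i → 0 < θnk k i ω := by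
    intro k i ω hki
    rcases eq_or_lt_of_le hki with rfl | h
    · rw [hθkk]; exact hθ₀
    · rw [hθnk k i ω h]; exact hψpos _
  have hθmeas : ∀ k i, k ≤ i → Measurable (θnk k i) := by
    intro k i hki
    rcases eq_or_lt_of_le hki with rfl | h
    · rw [show θnk k k = fun _ => θ₀ from funext (hθkk k)]; exact measurable_const
    · rw [show θnk k i = fun ω => ψinv ((∑ j ∈ Finset.Ico k i, Real.log (X j ω)) / ((i:ℝ) - k))
        from funext (fun ω => hθnk k i ω h)]
      exact hψmeas.comp ((Finset.measurable_sum _ (fun j _ => (hXmeas j).log)).div_const _)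
  have hΛnonneg : ∀ k i ω, 0 ≤ Λ k i ω := by
    intro k i ω; rw [hΛ]
    refine Finset.prod_nonneg fun j hj => ?_
    exact div_nonneg (gam_nonneg (hθpos k j ω (Finset.mem_Icc.mp hj).1) _) (gam_nonneg hθ₀ _)
  have hΛmeas : ∀ k i, Measurable (Λ k i) := by
    intro k i
    rw [show Λ k i = fun ω => ∏ j ∈ Finset.Icc k i, gam (θnk k j ω) (X j ω) / gam θ₀ (X j ω)
      from funext (hΛ k i)]
    refine Finset.measurable_prod _ fun j hj => ?_
    have hkj : k ≤ j := (Finset.mem_Icc.mp hj).1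
    exact (gam_meas (hθmeas k j hkj) (hXmeas j) (fun ω => hθpos k j ω hkj)).div
      (gam_meas measurable_const (hXmeas j) (fun _ => hθ₀))
  have hRnonneg : ∀ i ω, 0 ≤ R i ω := by
    intro i ω; rw [hR]; exact Finset.sum_nonneg fun k _ => hΛnonneg k i ω
  have hRmeas : ∀ i, Measurable (R i) := by
    intro i
    rw [show R i = fun ω => ∑ k ∈ Finset.Icc 1 i, Λ k i ω from funext (hR i)]
    exact Finset.measurable_sum _ fun k _ => hΛmeas k i
  have hR0 : ∀ ω, R 0 ω = 0 := by intro ω; rw [hR]; simp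
  have hNmeas : Measurable N := by
    rw [show N = fun ω => ⨅ n : ℕ, ⨅ _ : 1 ≤ n ∧ A ≤ R n ω, (n : ℝ≥0∞) from funext hN]
    refine Measurable.iInf fun n => ?_
    simp_rw [iInf_eq_if]
    by_cases h1 : 1 ≤ n
    · refine Measurable.ite ?_ measurable_const measurable_const
      have : {ω | 1 ≤ n ∧ A ≤ R n ω} = {ω | A ≤ R n ω} := by ext ω; simp [h1]
      rw [this]
      exact measurableSet_le measurable_const (hRmeas n)
    · refine Measurable.ite ?_ measurable_const measurable_const
      have : {ω | 1 ≤ n ∧ A ≤ R n ω} = ∅ := by ext ω; simp [h1]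
      rw [this]; exact MeasurableSet.empty
  have hN1 : ∀ ω, (1:ℝ≥0∞) ≤ N ω := by
    intro ω; rw [hN]
    exact le_iInf₂ fun n hn => by exact_mod_cast Nat.one_le_cast.mpr hn.1
  set D : ℕ → Set Ω := fun m => {ω | (m:ℝ≥0∞) ≤ N ω} with hDdef
  have hDmeas : ∀ m, MeasurableSet (D m) := fun m => measurableSet_le measurable_const hNmeas
  have hDmono : ∀ {a b : ℕ}, a ≤ b → D b ⊆ D a := by
    intro a b hab ω hω
    simp only [hDdef, Set.mem_setOf_eq] at hω ⊢
    exact le_trans (Nat.cast_le.mpr hab) hω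
  set E : ℕ → Set Ω := fun m => D m \ D (m+1) with hEdef
  have hEmeas : ∀ m, MeasurableSet (E m) := fun m => (hDmeas m).diff (hDmeas (m+1))
  -- on E m, A ≤ R m
  have hAE : ∀ m ω, ω ∈ E m → A ≤ R m ω := by
    intro m ω hω
    obtain ⟨h1, h2⟩ := hω
    simp only [hDdef, Set.mem_setOf_eq, not_le] at h1 h2
    have h2' : N ω < ((m+1 : ℕ) : ℝ≥0∞) := h2
    rw [hN] at h2'
    obtain ⟨n, hn⟩ := iInf_lt_iff.mp h2'
    obtain ⟨hnS, hnlt⟩ := iInf_lt_iff.mp hn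
    have hnm : n ≤ m := by exact_mod_cast Nat.lt_succ_iff.mp (by exact_mod_cast hnlt)
    have hmn : (m : ℝ≥0∞) ≤ n := le_trans h1 (by rw [hN]; exact iInf₂_le n hnS)
    have : m = n := le_antisymm (by exact_mod_cast hmn) hnm
    rw [this]
    exact hnS.2
  -- the two main claims
  have claim1 : ∀ s : ℕ,
      (∫⁻ ω, (D (s+1)).indicator (fun _ => (1:ℝ≥0∞)) ω * ENNReal.ofReal (R (s+1) ω) ∂P)
      = (∫⁻ ω, (D (s+1)).indicator (fun _ => (1:ℝ≥0∞)) ω * ENNReal.ofReal (R s ω) ∂P)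
        + P (D (s+1)) := by
    intro s
    set m := s + 1 with hm
    -- the "past" random vector
    set g : (↥(Finset.range m) → ℝ) → (ℕ → ℝ) :=
      fun u j => if h : j ∈ Finset.range m then u ⟨j, h⟩ else 0 with hg
    have hgmeas : Measurable g := by
      refine measurable_pi_lambda _ fun j => ?_
      by_cases h : j ∈ Finset.range m
      · simp only [hg, dif_pos h]; exact measurable_pi_apply _
      · simp only [hg, dif_neg h]; exact measurable_const
    set Y : Ω → (ℕ → ℝ) := fun ω => g (fun i : ↥(Finset.range m) => X i ω) with hY
    have hYmeas : Measurable Y := hgmeas.comp (measurable_pi_lambda _ fun i => hXmeas i)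
    have hYap : ∀ ω j, j < m → Y ω j = X j ω := by
      intro ω j hj
      simp only [hY, hg]
      rw [dif_pos (Finset.mem_range.mpr hj)]
    have hind1 : IndepFun Y (X m) P := by
      have h0 := hindep.indepFun_finset (Finset.range m) {m}
        (by simp [Finset.disjoint_singleton_right]) hXmeas
      have h1 := h0.comp hgmeas
        (measurable_pi_apply (⟨m, Finset.mem_singleton_self m⟩ : ↥({m} : Finset ℕ)))
      exact h1
    have hprod : Measure.map (fun ω => (Y ω, X m ω)) P
        = (Measure.map Y P).prod (gammaMeasure θ₀ 1) := by
      rw [← hlaw m (by omega)]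
      exact (indepFun_iff_map_prod_eq_prod_map_map hYmeas.aemeasurable
        (hXmeas m).aemeasurable).mp hind1
    haveI : IsProbabilityMeasure (Measure.map Y P) := Measure.isProbabilityMeasure_map hYmeas.aemeasurable
    -- mirrors of the statistics on sequence space
    set tg : ℕ → ℕ → (ℕ → ℝ) → ℝ := fun k i v =>
      if k < i then ψinv ((∑ j ∈ Finset.Ico k i, Real.log (v j)) / ((i:ℝ) - k)) else θ₀ with htg
    have htgpos : ∀ k i v, 0 < tg k i v := by
      intro k i v
      simp only [htg]
      split
      · exact hψpos _
      · exact hθ₀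
    have htgmeas : ∀ k i, Measurable (tg k i) := by
      intro k i
      by_cases h : k < i
      · simp only [htg, if_pos h]
        exact hψmeas.comp
          ((Finset.measurable_sum _ fun j _ => (measurable_pi_apply j).log).div_const _)
      · simp only [htg, if_neg h]; exact measurable_const
    have htgY : ∀ k i ω, k ≤ i → i ≤ m → tg k i (Y ω) = θnk k i ω := by
      intro k i ω hki him
      by_cases h : k < i
      · simp only [htg, if_pos h]
        rw [hθnk k i ω h]
        congr 2
        refine Finset.sum_congr rfl fun j hj => ?_
        rw [hYap ω j (lt_of_lt_of_le (Finset.mem_Ico.mp hj).2 him)]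
      · have hik : i = k := le_antisymm (not_lt.mp h) hki
        subst hik
        simp only [htg, if_neg h]
        rw [hθkk]
    set Lg : ℕ → ℕ → (ℕ → ℝ) → ℝ := fun k i v =>
      ∏ j ∈ Finset.Icc k i, gam (tg k j v) (v j) / gam θ₀ (v j) with hLg
    have hLgmeas : ∀ k i, Measurable (Lg k i) := by
      intro k i
      refine Finset.measurable_prod _ fun j _ => ?_
      exact (gam_meas (htgmeas k j) (measurable_pi_apply j) (fun v => htgpos k j v)).div
        (gam_meas measurable_const (measurable_pi_apply j) fun _ => hθ₀)
    have hLgY : ∀ k i ω, i < m → Lg k i (Y ω) = Λ k i ω := by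
      intro k i ω him
      rw [hΛ]
      refine Finset.prod_congr rfl fun j hj => ?_
      obtain ⟨hkj, hji⟩ := Finset.mem_Icc.mp hj
      rw [htgY k j ω hkj (by omega), hYap ω j (by omega)]
    set Rg : ℕ → (ℕ → ℝ) → ℝ := fun i v => ∑ k ∈ Finset.Icc 1 i, Lg k i v with hRg
    have hRgmeas : ∀ i, Measurable (Rg i) :=
      fun i => Finset.measurable_sum _ fun k _ => hLgmeas k i
    have hRgY : ∀ i ω, i < m → Rg i (Y ω) = R i ω := by
      intro i ω him
      rw [hR]
      exact Finset.sum_congr rfl fun k _ => hLgY k i ω him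
    set C : Set (ℕ → ℝ) := {v | ∀ j, 1 ≤ j → j < m → Rg j v < A} with hC
    have hCmeas : MeasurableSet C := by
      have hCeq : C = ⋂ j : ℕ, {v | 1 ≤ j → j < m → Rg j v < A} := by
        ext v; simp only [hC, Set.mem_setOf_eq, Set.mem_iInter]
      rw [hCeq]
      refine MeasurableSet.iInter fun j => ?_
      by_cases h : 1 ≤ j ∧ j < m
      · have : {v | 1 ≤ j → j < m → Rg j v < A} = {v | Rg j v < A} := by
          ext v; simp [h.1, h.2]
        rw [this]; exact measurableSet_lt (hRgmeas j) measurable_const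
      · have : {v | 1 ≤ j → j < m → Rg j v < A} = Set.univ := by
          ext v
          simp only [Set.mem_setOf_eq, Set.mem_univ, iff_true]
          intro h1 h2
          exact absurd ⟨h1, h2⟩ h
        rw [this]; exact MeasurableSet.univ
    have hNC : ∀ ω, ω ∈ D m ↔ Y ω ∈ C := by
      intro ω
      constructor
      · intro hω
        simp only [hDdef, Set.mem_setOf_eq] at hω
        intro j h1 hjm
        rw [hRgY j ω hjm]
        by_contra hcon
        push_neg at hcon
        have hjS : j ∈ {n : ℕ | 1 ≤ n ∧ A ≤ R n ω} := ⟨h1, hcon⟩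
        have hNj : N ω ≤ (j : ℝ≥0∞) := by rw [hN]; exact iInf₂_le j hjS
        have h2 : (m : ℝ≥0∞) ≤ (j : ℝ≥0∞) := le_trans hω hNj
        have : m ≤ j := by exact_mod_cast h2
        omega
      · intro hv
        show (m : ℝ≥0∞) ≤ N ω
        rw [hN]
        refine le_iInf₂ fun n hn => ?_
        by_contra hcon
        push_neg at hcon
        have hnm : n < m := by exact_mod_cast hcon
        have hlt := hv n hn.1 hnm
        rw [hRgY n ω hnm] at hlt
        exact absurd hn.2 (not_le.mpr hlt)
    -- the product-space integrand
    set H : (ℕ → ℝ) × ℝ → ℝ≥0∞ := fun q =>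
      C.indicator (fun _ => (1:ℝ≥0∞)) q.1 *
        ∑ k ∈ Finset.Icc 1 m, ENNReal.ofReal (Lg k s q.1)
          * ENNReal.ofReal (gam (tg k m q.1) q.2 / gam θ₀ q.2) with hH
    have hratio_meas : ∀ k, Measurable fun q : (ℕ → ℝ) × ℝ =>
        ENNReal.ofReal (gam (tg k m q.1) q.2 / gam θ₀ q.2) := by
      intro k
      refine Measurable.ennreal_ofReal ?_
      exact (gam_meas ((htgmeas k m).comp measurable_fst) measurable_snd
        (fun q => htgpos k m q.1)).div
        (gam_meas measurable_const measurable_snd fun _ => hθ₀)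
    have hHmeas : Measurable H := by
      refine ((measurable_const.indicator hCmeas).comp measurable_fst).mul ?_
      refine Finset.measurable_sum _ fun k _ => ?_
      exact (((hLgmeas k s).comp measurable_fst).ennreal_ofReal).mul (hratio_meas k)
    have hGmeas : ∀ k, Measurable fun v : ℕ → ℝ =>
        C.indicator (fun _ => (1:ℝ≥0∞)) v * ENNReal.ofReal (Lg k s v) :=
      fun k => (measurable_const.indicator hCmeas).mul (hLgmeas k s).ennreal_ofReal
    -- pointwise identity
    have hpt : ∀ ω, (D m).indicator (fun _ => (1:ℝ≥0∞)) ω * ENNReal.ofReal (R m ω)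
        = H (Y ω, X m ω) := by
      intro ω
      simp only [hH]
      congr 1
      · rw [Set.indicator_apply, Set.indicator_apply, if_congr (hNC ω) rfl rfl]
      · rw [hR m ω, ENNReal.ofReal_sum_of_nonneg (fun k _ => hΛnonneg k m ω)]
        refine Finset.sum_congr rfl fun k hk => ?_
        obtain ⟨hk1, hkm⟩ := Finset.mem_Icc.mp hk
        rw [hLgY k s ω (by omega), htgY k m ω hkm le_rfl,
          ← ENNReal.ofReal_mul (hΛnonneg k s ω)]
        congr 1
        rw [hΛ k m ω, hΛ k s ω, hm, Finset.prod_Icc_succ_top (by omega : k ≤ s + 1)]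
    -- main computation
    calc ∫⁻ ω, (D m).indicator (fun _ => (1:ℝ≥0∞)) ω * ENNReal.ofReal (R m ω) ∂P
        = ∫⁻ ω, H (Y ω, X m ω) ∂P := lintegral_congr hpt
      _ = ∫⁻ q, H q ∂((Measure.map Y P).prod (gammaMeasure θ₀ 1)) := by
          rw [← hprod, lintegral_map hHmeas (hYmeas.prodMk (hXmeas m))]
      _ = ∑ k ∈ Finset.Icc 1 m, ∫⁻ q : (ℕ → ℝ) × ℝ,
            (C.indicator (fun _ => (1:ℝ≥0∞)) q.1 * ENNReal.ofReal (Lg k s q.1))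
            * ENNReal.ofReal (gam (tg k m q.1) q.2 / gam θ₀ q.2)
            ∂((Measure.map Y P).prod (gammaMeasure θ₀ 1)) := by
          have hHsum : ∀ q : (ℕ → ℝ) × ℝ, H q = ∑ k ∈ Finset.Icc 1 m,
              (C.indicator (fun _ => (1:ℝ≥0∞)) q.1 * ENNReal.ofReal (Lg k s q.1))
              * ENNReal.ofReal (gam (tg k m q.1) q.2 / gam θ₀ q.2) := by
            intro q
            simp only [hH, Finset.mul_sum, mul_assoc]
          rw [lintegral_congr hHsum,
            lintegral_finset_sum (f := fun k (q : (ℕ → ℝ) × ℝ) =>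
              (C.indicator (fun _ => (1:ℝ≥0∞)) q.1 * ENNReal.ofReal (Lg k s q.1))
              * ENNReal.ofReal (gam (tg k m q.1) q.2 / gam θ₀ q.2)) _
              (fun k _ => by exact ((hGmeas k).comp measurable_fst).mul (hratio_meas k))]
      _ = ∑ k ∈ Finset.Icc 1 m, ∫⁻ v, C.indicator (fun _ => (1:ℝ≥0∞)) v
            * ENNReal.ofReal (Lg k s v) ∂(Measure.map Y P) := by
          refine Finset.sum_congr rfl fun k _ => ?_
          exact inner_step _ hθ₀ _ (hGmeas k) _ (htgmeas k m) (htgpos k m)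
      _ = ∑ k ∈ Finset.Icc 1 m, ∫⁻ ω, (D m).indicator (fun _ => (1:ℝ≥0∞)) ω
            * ENNReal.ofReal (Λ k s ω) ∂P := by
          refine Finset.sum_congr rfl fun k _ => ?_
          rw [lintegral_map (hGmeas k) hYmeas]
          refine lintegral_congr fun ω => ?_
          rw [hLgY k s ω (by omega)]
          congr 1
          rw [Set.indicator_apply, Set.indicator_apply, if_congr (hNC ω).symm rfl rfl]
      _ = (∫⁻ ω, (D m).indicator (fun _ => (1:ℝ≥0∞)) ω * ENNReal.ofReal (R s ω) ∂P)
            + P (D m) := by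
          rw [hm, Finset.sum_Icc_succ_top (by omega : 1 ≤ s + 1)]
          congr 1
          · rw [← lintegral_finset_sum (f := fun k ω => (D (s+1)).indicator (fun _ => (1:ℝ≥0∞)) ω
                * ENNReal.ofReal (Λ k s ω)) _ (fun k _ =>
              (measurable_const.indicator (hDmeas m)).mul (hΛmeas k s).ennreal_ofReal)]
            refine lintegral_congr fun ω => ?_
            rw [← Finset.mul_sum, hR s ω,
              ENNReal.ofReal_sum_of_nonneg (fun k _ => hΛnonneg k s ω)]
          · have hone : ∀ ω, Λ (s+1) s ω = 1 := fun ω => by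
              rw [hΛ, Finset.Icc_eq_empty (by omega), Finset.prod_empty]
            simp_rw [hone, ENNReal.ofReal_one, mul_one]
            rw [lintegral_indicator_const (hDmeas m), one_mul]
  have claim2 : ∀ s : ℕ,
      (∫⁻ ω, (D (s+1)).indicator (fun _ => (1:ℝ≥0∞)) ω * ENNReal.ofReal (R s ω) ∂P)
        + ENNReal.ofReal A * P (E s)
      ≤ ∫⁻ ω, (D s).indicator (fun _ => (1:ℝ≥0∞)) ω * ENNReal.ofReal (R s ω) ∂P := by
    intro s
    have hsplit : ∀ ω, (D s).indicator (fun _ => (1:ℝ≥0∞)) ω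
        = (D (s+1)).indicator (fun _ => (1:ℝ≥0∞)) ω + (E s).indicator (fun _ => (1:ℝ≥0∞)) ω := by
      intro ω
      by_cases h1 : ω ∈ D (s+1)
      · rw [Set.indicator_of_mem (hDmono (Nat.le_succ s) h1), Set.indicator_of_mem h1,
          Set.indicator_of_notMem (fun hc => hc.2 h1), add_zero]
      · by_cases h0 : ω ∈ D s
        · rw [Set.indicator_of_mem h0, Set.indicator_of_notMem h1,
            Set.indicator_of_mem (show ω ∈ D s \ D (s+1) from ⟨h0, h1⟩), zero_add]
        · rw [Set.indicator_of_notMem h0, Set.indicator_of_notMem h1,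
            Set.indicator_of_notMem (fun hc => h0 hc.1), add_zero]
    have hmeas1 : Measurable fun ω => (D (s+1)).indicator (fun _ => (1:ℝ≥0∞)) ω
        * ENNReal.ofReal (R s ω) :=
      ((measurable_const.indicator (hDmeas (s+1))).mul (hRmeas s).ennreal_ofReal)
    have hmeas2 : Measurable fun ω => (E s).indicator (fun _ => (1:ℝ≥0∞)) ω
        * ENNReal.ofReal (R s ω) :=
      ((measurable_const.indicator (hEmeas s)).mul (hRmeas s).ennreal_ofReal)
    calc (∫⁻ ω, (D (s+1)).indicator (fun _ => (1:ℝ≥0∞)) ω * ENNReal.ofReal (R s ω) ∂P)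
          + ENNReal.ofReal A * P (E s)
        ≤ (∫⁻ ω, (D (s+1)).indicator (fun _ => (1:ℝ≥0∞)) ω * ENNReal.ofReal (R s ω) ∂P)
          + ∫⁻ ω, (E s).indicator (fun _ => (1:ℝ≥0∞)) ω * ENNReal.ofReal (R s ω) ∂P := by
          gcongr
          calc ENNReal.ofReal A * P (E s)
              = ∫⁻ ω, (E s).indicator (fun _ => ENNReal.ofReal A) ω ∂P := by
                rw [lintegral_indicator_const (hEmeas s)]
            _ ≤ ∫⁻ ω, (E s).indicator (fun _ => (1:ℝ≥0∞)) ω * ENNReal.ofReal (R s ω) ∂P := by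
                refine lintegral_mono fun ω => ?_
                by_cases hω : ω ∈ E s
                · rw [Set.indicator_of_mem hω, Set.indicator_of_mem hω, one_mul]
                  exact ENNReal.ofReal_le_ofReal (hAE s ω hω)
                · rw [Set.indicator_of_notMem hω, Set.indicator_of_notMem hω, zero_mul]
      _ = ∫⁻ ω, (D s).indicator (fun _ => (1:ℝ≥0∞)) ω * ENNReal.ofReal (R s ω) ∂P := by
          rw [← lintegral_add_left hmeas1]
          refine lintegral_congr fun ω => ?_
          rw [hsplit ω, add_mul]
  -- combined recursion and chain
  have combined : ∀ s : ℕ,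
      (∫⁻ ω, (D (s+1)).indicator (fun _ => (1:ℝ≥0∞)) ω * ENNReal.ofReal (R (s+1) ω) ∂P)
        + ENNReal.ofReal A * P (E s)
      ≤ (∫⁻ ω, (D s).indicator (fun _ => (1:ℝ≥0∞)) ω * ENNReal.ofReal (R s ω) ∂P)
        + P (D (s+1)) := by
    intro s
    rw [claim1 s]
    calc (∫⁻ ω, (D (s+1)).indicator (fun _ => (1:ℝ≥0∞)) ω * ENNReal.ofReal (R s ω) ∂P)
          + P (D (s+1)) + ENNReal.ofReal A * P (E s)
        = ((∫⁻ ω, (D (s+1)).indicator (fun _ => (1:ℝ≥0∞)) ω * ENNReal.ofReal (R s ω) ∂P)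
          + ENNReal.ofReal A * P (E s)) + P (D (s+1)) := by ring
      _ ≤ (∫⁻ ω, (D s).indicator (fun _ => (1:ℝ≥0∞)) ω * ENNReal.ofReal (R s ω) ∂P)
          + P (D (s+1)) := add_le_add_left (claim2 s) _
  have hEbar0 : (∫⁻ ω, (D 0).indicator (fun _ => (1:ℝ≥0∞)) ω * ENNReal.ofReal (R 0 ω) ∂P) = 0 := by
    simp_rw [hR0, ENNReal.ofReal_zero, mul_zero, lintegral_zero]
  have chain : ∀ n : ℕ,
      (∫⁻ ω, (D n).indicator (fun _ => (1:ℝ≥0∞)) ω * ENNReal.ofReal (R n ω) ∂P)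
        + ENNReal.ofReal A * ∑ m ∈ Finset.range n, P (E m)
      ≤ ∑ m ∈ Finset.range n, P (D (m+1)) := by
    intro n
    induction n with
    | zero => simp [hEbar0]
    | succ n ih =>
      rw [Finset.sum_range_succ, Finset.sum_range_succ, mul_add]
      calc (∫⁻ ω, (D (n+1)).indicator (fun _ => (1:ℝ≥0∞)) ω * ENNReal.ofReal (R (n+1) ω) ∂P)
            + (ENNReal.ofReal A * ∑ m ∈ Finset.range n, P (E m) + ENNReal.ofReal A * P (E n))
          = ((∫⁻ ω, (D (n+1)).indicator (fun _ => (1:ℝ≥0∞)) ω * ENNReal.ofReal (R (n+1) ω) ∂P)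
            + ENNReal.ofReal A * P (E n)) + ENNReal.ofReal A * ∑ m ∈ Finset.range n, P (E m) := by
            ring
        _ ≤ ((∫⁻ ω, (D n).indicator (fun _ => (1:ℝ≥0∞)) ω * ENNReal.ofReal (R n ω) ∂P)
            + P (D (n+1))) + ENNReal.ofReal A * ∑ m ∈ Finset.range n, P (E m) :=
            add_le_add_left (combined n) _
        _ = ((∫⁻ ω, (D n).indicator (fun _ => (1:ℝ≥0∞)) ω * ENNReal.ofReal (R n ω) ∂P)
            + ENNReal.ofReal A * ∑ m ∈ Finset.range n, P (E m)) + P (D (n+1)) := by ring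
        _ ≤ (∑ m ∈ Finset.range n, P (D (m+1))) + P (D (n+1)) := add_le_add_left ih _
  -- partial sums of P (D (m+1)) are bounded by ∫⁻ N
  have hDsum : ∀ n : ℕ, (∑ m ∈ Finset.range n, P (D (m+1))) ≤ ∫⁻ ω, N ω ∂P := by
    intro n
    have : (∑ m ∈ Finset.range n, P (D (m+1)))
        = ∫⁻ ω, ∑ m ∈ Finset.range n, (D (m+1)).indicator (fun _ => (1:ℝ≥0∞)) ω ∂P := by
      rw [lintegral_finset_sum _ (fun m _ => measurable_const.indicator (hDmeas (m+1)))]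
      refine Finset.sum_congr rfl fun m _ => ?_
      rw [lintegral_indicator_const (hDmeas (m+1)), one_mul]
    rw [this]
    refine lintegral_mono fun ω => ?_
    calc (∑ m ∈ Finset.range n, (D (m+1)).indicator (fun _ => (1:ℝ≥0∞)) ω)
        = ∑ m ∈ Finset.range n, if ((m+1 : ℕ) : ℝ≥0∞) ≤ N ω then (1:ℝ≥0∞) else 0 := by
          refine Finset.sum_congr rfl fun m _ => ?_
          rw [Set.indicator_apply]
          congr 1
      _ ≤ N ω := sum_ind_range_le (N ω) n
  -- hence A * partial sums of P (E m) are bounded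
  have hfinal : ∀ n : ℕ, ENNReal.ofReal A * ∑ m ∈ Finset.range n, P (E m) ≤ ∫⁻ ω, N ω ∂P :=
    fun n => le_trans (le_trans (le_add_left le_rfl) (chain n)) (hDsum n)
  -- conclude
  by_cases htop : P {ω | N ω = ⊤} = 0
  · have hdisj : Pairwise (Function.onFun Disjoint E) := by
      intro a b hab
      rcases hab.lt_or_gt with h | h
      · refine Set.disjoint_left.mpr fun ω hωa hωb => ?_
        exact hωa.2 (hDmono (by omega : a + 1 ≤ b) hωb.1)
      · refine Set.disjoint_left.mpr fun ω hωa hωb => ?_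
        exact hωb.2 (hDmono (by omega : b + 1 ≤ a) hωa.1)
    have hcover : {ω | N ω ≠ ⊤} ⊆ ⋃ m, E m := by
      intro ω hω
      have hex : ∃ m : ℕ, ¬ ((m+1 : ℕ) : ℝ≥0∞) ≤ N ω := by
        obtain ⟨n, hn⟩ := ENNReal.exists_nat_gt hω
        exact ⟨n, not_le.mpr (lt_of_lt_of_le hn (by exact_mod_cast Nat.le_succ n))⟩
      set m₀ := Nat.find hex with hm₀
      refine Set.mem_iUnion.mpr ⟨m₀, ?_, ?_⟩
      · show ((m₀ : ℕ) : ℝ≥0∞) ≤ N ω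
        rcases Nat.eq_zero_or_pos m₀ with h0 | hpos
        · rw [h0]; simp
        · obtain ⟨j, hj⟩ := Nat.exists_eq_succ_of_ne_zero hpos.ne'
          have := Nat.find_min hex (show j < m₀ by omega)
          rw [not_not] at this
          rw [hj]
          exact_mod_cast this
      · exact Nat.find_spec hex
    have hone : 1 ≤ P (⋃ m, E m) := by
      have h1 : P Set.univ ≤ P {ω | N ω = ⊤} + P (⋃ m, E m) := by
        refine le_trans (measure_mono ?_) (measure_union_le _ _)
        intro ω _
        by_cases h : N ω = ⊤
        · exact Or.inl h
        · exact Or.inr (hcover h)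
      rwa [measure_univ, htop, zero_add] at h1
    have hsum : ∑' m, P (E m) = P (⋃ m, E m) := (measure_iUnion hdisj hEmeas).symm
    calc ENNReal.ofReal A = ENNReal.ofReal A * 1 := (mul_one _).symm
      _ ≤ ENNReal.ofReal A * ∑' m, P (E m) := by rw [hsum]; exact mul_le_mul_right hone _
      _ = ∑' m, ENNReal.ofReal A * P (E m) := ENNReal.tsum_mul_left.symm
      _ = ⨆ n, ∑ m ∈ Finset.range n, ENNReal.ofReal A * P (E m) := ENNReal.tsum_eq_iSup_nat
      _ ≤ ∫⁻ ω, N ω ∂P := by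
          refine iSup_le fun n => ?_
          rw [← Finset.mul_sum]
          exact hfinal n
  · have : (∫⁻ ω, N ω ∂P) = ⊤ := by
      have hle : ∫⁻ ω, ({ω | N ω = ⊤}).indicator (fun _ => (⊤:ℝ≥0∞)) ω ∂P ≤ ∫⁻ ω, N ω ∂P := by
        refine lintegral_mono fun ω => ?_
        by_cases hω : ω ∈ {ω | N ω = ⊤}
        · rw [Set.indicator_of_mem hω]; exact le_of_eq hω.symm
        · rw [Set.indicator_of_notMem hω]; exact zero_le
      have hmeasT : MeasurableSet {ω | N ω = ⊤} := hNmeas (measurableSet_singleton ⊤)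
      rw [lintegral_indicator_const hmeasT] at hle
      rw [ENNReal.top_mul htop] at hle
      exact top_le_iff.mp hle
    rw [this]; exact le_top
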